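/- Let M be a finite set of integers in [−t, t] with t ≥ 1, K ≥ 2 an integer, and for each m ∈ M set m' := m/(t·√K). Define X ⊆ S² ⊆ ℝ³ as the set of points ℓ_m := (−√(1 − m'²), m', 0) and r_m := (√(1 − m'²), 0, m') for m ∈ M. If S ⊆ M is a K-subset with Σ_{m∈S} m = 0, then the 2K-set T := {ℓ_m, r_m : m ∈ S} has centroid z_T = 0. -/

import Mathlib

open scoped Classical in
theorem stmt_16 (M : Finset ℤ) (t K : ℕ) (ht : 1 ≤ t) (hK : 2 ≤ K)
    (hrange : ∀ m ∈ M, |m| ≤ (t : ℤ))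
    (ℓf rf : ℤ → EuclideanSpace ℝ (Fin 3))
    (hℓf : ∀ m : ℤ, ℓf m = (WithLp.equiv 2 (Fin 3 → ℝ)).symm
      ![-Real.sqrt (1 - ((m : ℝ) / (t * Real.sqrt K)) ^ 2),
        (m : ℝ) / (t * Real.sqrt K), 0])
    (hrf : ∀ m : ℤ, rf m = (WithLp.equiv 2 (Fin 3 → ℝ)).symm
      ![Real.sqrt (1 - ((m : ℝ) / (t * Real.sqrt K)) ^ 2), 0,
        (m : ℝ) / (t * Real.sqrt K)])
    (S : Finset ℤ) (hS : S ⊆ M) (hScard : S.card = K) (hsum : ∑ m ∈ S, m = 0) :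
    ((2 * K : ℝ))⁻¹ • ∑ u ∈ (S.image ℓf ∪ S.image rf), u = 0 := by
  have hc0 : (0:ℝ) < (t : ℝ) * Real.sqrt K := by
    apply mul_pos
    · exact_mod_cast ht
    · exact Real.sqrt_pos.2 (by exact_mod_cast Nat.lt_of_lt_of_le (by norm_num) hK)
  have hcne : ((t : ℝ) * Real.sqrt K) ≠ 0 := ne_of_gt hc0
  have hℓinj : ∀ a ∈ S, ∀ b ∈ S, ℓf a = ℓf b → a = b := by
    intro a _ b _ hab
    rw [hℓf a, hℓf b] at hab
    have h1 : (a : ℝ) / (t * Real.sqrt K) = (b : ℝ) / (t * Real.sqrt K) := by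
      simpa using congrArg (fun v => (WithLp.equiv 2 (Fin 3 → ℝ)) v 1) hab
    have : (a:ℝ) = b := by field_simp at h1; exact_mod_cast h1
    exact_mod_cast this
  have hrinj : ∀ a ∈ S, ∀ b ∈ S, rf a = rf b → a = b := by
    intro a _ b _ hab
    rw [hrf a, hrf b] at hab
    have h1 : (a : ℝ) / (t * Real.sqrt K) = (b : ℝ) / (t * Real.sqrt K) := by
      simpa using congrArg (fun v => (WithLp.equiv 2 (Fin 3 → ℝ)) v 2) hab
    have : (a:ℝ) = b := by field_simp at h1; exact_mod_cast h1
    exact_mod_cast this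
  have hdisj : Disjoint (S.image ℓf) (S.image rf) := by
    rw [Finset.disjoint_left]
    rintro x hx hx'
    obtain ⟨a, _, ha⟩ := Finset.mem_image.1 hx
    obtain ⟨b, _, hb⟩ := Finset.mem_image.1 hx'
    have hab : ℓf a = rf b := by rw [ha, hb]
    rw [hℓf a, hrf b] at hab
    have h1 : (a : ℝ) / (t * Real.sqrt K) = 0 := by
      simpa using congrArg (fun v => (WithLp.equiv 2 (Fin 3 → ℝ)) v 1) hab
    have h0 : -Real.sqrt (1 - ((a:ℝ) / (t * Real.sqrt K)) ^ 2)
        = Real.sqrt (1 - ((b:ℝ) / (t * Real.sqrt K)) ^ 2) := by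
      simpa using congrArg (fun v => (WithLp.equiv 2 (Fin 3 → ℝ)) v 0) hab
    rw [h1] at h0
    norm_num at h0
    nlinarith [Real.sqrt_nonneg (1 - ((b:ℝ)/(t*Real.sqrt K))^2), h0]
  rw [Finset.sum_union hdisj, Finset.sum_image hℓinj, Finset.sum_image hrinj,
    ← Finset.sum_add_distrib]
  have hsum' : ∑ m ∈ S, (ℓf m + rf m) = 0 := by
    have hc : (∑ m ∈ S, (m : ℝ)) = 0 := by simpa using congrArg (fun z : ℤ => (z : ℝ)) hsum
    ext i
    have : (∑ m ∈ S, (ℓf m + rf m)) i = ∑ m ∈ S, (ℓf m i + rf m i) := by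
      rw [WithLp.ofLp_sum, Finset.sum_apply]; rfl
    rw [this]
    fin_cases i <;>
      simp [hℓf, hrf, ← Finset.sum_div, hc]
  rw [hsum', smul_zero]
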